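/- arXiv:2006.02918 — 3 statements merged into one kernel-verified Lean document; each statement's English description precedes it below -/
import Mathlib

section
/- For every nonnegative integer n: ∑_{k=0}^{n} (−n)_k(−1/3−n)_k/[(1)_k(−3n−1)_k] · (9/8)^k = (5/6)_n / (2^n · (2/3)_n), where (x)_k is the rising factorial. -/
open Polynomial Finset

noncomputable def Tt (n k : ℕ) : ℚ :=
  (ascPochhammer ℚ k).eval (-(n : ℚ)) * (ascPochhammer ℚ k).eval (-1 / 3 - (n : ℚ)) /
    ((ascPochhammer ℚ k).eval 1 * (ascPochhammer ℚ k).eval (-(3 * n : ℚ) - 1)) *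
    (9 / 8 : ℚ) ^ k

noncomputable def Hh (n k : ℕ) : ℚ :=
  (-8/9 : ℚ) * (k+1) * (4*k - 6*n - 3) * ((k:ℚ) - 3*n - 1) *
    ((ascPochhammer ℚ k).eval (-(n : ℚ)) * (ascPochhammer ℚ k).eval (-1 / 3 - (n : ℚ))) *
    (9/8 : ℚ)^(k+1) /
    ((ascPochhammer ℚ (k+1)).eval 1 * (ascPochhammer ℚ (k+1)).eval (-(3 * n : ℚ) - 1))

noncomputable def gg (n : ℕ) : ℕ → ℚ
  | 0 => 0
  | (k+1) => Hh n k

lemma succ_left_eval (k : ℕ) (x : ℚ) :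
    (ascPochhammer ℚ (k+1)).eval x = x * (ascPochhammer ℚ k).eval (x+1) := by
  rw [ascPochhammer_succ_left]
  simp [eval_comp]

lemma shift_eval (k : ℕ) (x y : ℚ) (hxy : y = x - 1) :
    (ascPochhammer ℚ k).eval y * (y + k) = y * (ascPochhammer ℚ k).eval x := by
  subst hxy
  have h1 := succ_left_eval k (x-1)
  have h2 := ascPochhammer_succ_eval (S := ℚ) k (x-1)
  rw [h2] at h1
  simpa using h1

lemma asc_ne (k : ℕ) (x : ℚ) (h : ∀ j < k, x + j ≠ 0) :
    (ascPochhammer ℚ k).eval x ≠ 0 := by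
  induction k with
  | zero => simp
  | succ k ih =>
    rw [ascPochhammer_succ_eval]
    exact mul_ne_zero (ih fun j hj => h j (hj.trans (Nat.lt_succ_self k)))
      (h k (Nat.lt_succ_self k))

lemma asc_neg_self (n : ℕ) : (ascPochhammer ℚ (n+1)).eval (-(n:ℚ)) = 0 := by
  rw [ascPochhammer_succ_eval]
  simp

lemma key0 (n : ℕ) :
    (12*n+8 : ℚ) * Tt (n+1) 0 - (6*n+5) * Tt n 0 = gg n 1 - gg n 0 := by
  have hd : (-(3*(n:ℚ)) - 1) ≠ 0 := by
    have : (0:ℚ) ≤ n := Nat.cast_nonneg n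
    intro h; linarith [h]
  simp only [Tt, gg, Hh]
  simp only [ascPochhammer_zero, Polynomial.eval_one, pow_zero, Nat.cast_zero,
    ascPochhammer_succ_eval]
  push_cast
  have hd' : -((n:ℚ)*3) - 1 ≠ 0 := by intro h; linarith
  simp only [add_zero, zero_add, mul_zero, zero_mul, sub_zero, mul_one, one_mul]
  field_simp
  ring

set_option maxHeartbeats 4000000 in
lemma key (n k : ℕ) (hk : k ≤ n) (hn : 1 ≤ n) :
    (12*n+8 : ℚ) * Tt (n+1) (k+1) - (6*n+5) * Tt n (k+1) = gg n (k+2) - gg n (k+1) := by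
  show _ = Hh n (k+1) - Hh n k
  have hkn : (k:ℚ) ≤ n := by exact_mod_cast hk
  have hn1 : (1:ℚ) ≤ n := by exact_mod_cast hn
  have hk0 : (0:ℚ) ≤ k := Nat.cast_nonneg k
  have hc : (ascPochhammer ℚ k).eval (1:ℚ) ≠ 0 := by
    apply asc_ne; intro j hj; positivity
  have hd : (ascPochhammer ℚ k).eval (-(3*(n:ℚ)) - 1) ≠ 0 := by
    apply asc_ne; intro j hj
    have hj' : (j:ℚ) < k := by exact_mod_cast hj
    intro h; linarith
  -- shift relations
  have S1 := shift_eval k (-(n:ℚ)) (-(n:ℚ)-1) (by ring)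
  have S2 := shift_eval k (-1/3 - (n:ℚ)) (-1/3 - (n:ℚ) - 1) (by ring)
  have S3 := shift_eval k (-(3*(n:ℚ)) - 1) (-(3*(n:ℚ)) - 2) (by ring)
  have S4 := shift_eval k (-(3*(n:ℚ)) - 2) (-(3*(n:ℚ)) - 3) (by ring)
  have S5 := shift_eval k (-(3*(n:ℚ)) - 3) (-(3*(n:ℚ)) - 4) (by ring)
  have z1 : (-(n:ℚ)-1) + k ≠ 0 := by intro h; linarith
  have z2 : (-1/3 - (n:ℚ) - 1) + k ≠ 0 := by intro h; linarith
  have z3 : (-(3*(n:ℚ)) - 2) + k ≠ 0 := by intro h; linarith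
  have z4 : (-(3*(n:ℚ)) - 3) + k ≠ 0 := by intro h; linarith
  have z5 : (-(3*(n:ℚ)) - 4) + k ≠ 0 := by intro h; linarith
  have ha2 : (ascPochhammer ℚ k).eval (-(n:ℚ)-1)
      = (-(n:ℚ)-1) * (ascPochhammer ℚ k).eval (-(n:ℚ)) / ((-(n:ℚ)-1) + k) :=
    (eq_div_of_mul_eq z1 S1)
  have hb2 : (ascPochhammer ℚ k).eval (-1/3 - (n:ℚ) - 1)
      = (-1/3 - (n:ℚ) - 1) * (ascPochhammer ℚ k).eval (-1/3 - (n:ℚ)) / ((-1/3 - (n:ℚ) - 1) + k) :=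
    (eq_div_of_mul_eq z2 S2)
  have hm : (ascPochhammer ℚ k).eval (-(3*(n:ℚ)) - 2)
      = (-(3*(n:ℚ)) - 2) * (ascPochhammer ℚ k).eval (-(3*(n:ℚ)) - 1) / ((-(3*(n:ℚ)) - 2) + k) :=
    (eq_div_of_mul_eq z3 S3)
  have he : (ascPochhammer ℚ k).eval (-(3*(n:ℚ)) - 3)
      = (-(3*(n:ℚ)) - 3) * (ascPochhammer ℚ k).eval (-(3*(n:ℚ)) - 2) / ((-(3*(n:ℚ)) - 3) + k) :=
    (eq_div_of_mul_eq z4 S4)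
  have hd2 : (ascPochhammer ℚ k).eval (-(3*(n:ℚ)) - 4)
      = (-(3*(n:ℚ)) - 4) * (ascPochhammer ℚ k).eval (-(3*(n:ℚ)) - 3) / ((-(3*(n:ℚ)) - 4) + k) :=
    (eq_div_of_mul_eq z5 S5)
  rw [hm] at he
  rw [he] at hd2
  -- expand the goal
  simp only [Tt, Hh]
  have A1 : (-(((n:ℕ)+1 : ℕ):ℚ)) = -(n:ℚ)-1 := by push_cast; ring
  have A2 : (-1/3 - (((n:ℕ)+1 : ℕ):ℚ)) = -1/3 - (n:ℚ) - 1 := by push_cast; ring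
  have A3 : (-(3 * (((n:ℕ)+1 : ℕ):ℚ)) - 1) = -(3*(n:ℚ)) - 4 := by push_cast; ring
  rw [A1, A2, A3]
  simp only [ascPochhammer_succ_eval]
  rw [ha2, hb2, hd2]
  set a := (ascPochhammer ℚ k).eval (-(n:ℚ)) with hA
  set b := (ascPochhammer ℚ k).eval (-1/3 - (n:ℚ)) with hB
  set c := (ascPochhammer ℚ k).eval (1:ℚ) with hC
  set d := (ascPochhammer ℚ k).eval (-(3*(n:ℚ)) - 1) with hD
  push_cast
  have w1 : (1:ℚ)+(k:ℚ) ≠ 0 := by positivity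
  have w2 : (1:ℚ)+((k:ℚ)+1) ≠ 0 := by positivity
  have w3 : -(3*(n:ℚ))-1+(k:ℚ) ≠ 0 := by intro h; linarith
  have w4 : -(3*(n:ℚ))-1+((k:ℚ)+1) ≠ 0 := by intro h; linarith
  have w5 : -(3*(n:ℚ))-4+(k:ℚ) ≠ 0 := by intro h; linarith
  have hy2 : (-(3*(n:ℚ))-2) ≠ 0 := by intro h; linarith
  have hy3 : (-(3*(n:ℚ))-3) ≠ 0 := by intro h; linarith
  have hy4 : (-(3*(n:ℚ))-4) ≠ 0 := by intro h; linarith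
  have hfac : ((k.factorial : ℚ)) ≠ 0 := by
    exact_mod_cast Nat.factorial_ne_zero k
  have u1 : (-1 - 3*(n:ℚ) - 3 + (k:ℚ)*3) ≠ 0 := by intro h; linarith
  have u2 : (-(3*(n:ℚ)) + (k:ℚ)) ≠ 0 := by intro h; linarith
  have v1 : (-(n:ℚ)-1) ≠ 0 := by intro h; linarith
  have v2 : (-1 - (n:ℚ)*3 - 3 + (k:ℚ)*3) ≠ 0 := by intro h; linarith
  have v3 : (-((n:ℚ)*3) - 4) ≠ 0 := by intro h; linarith
  have v4 : (-((n:ℚ)*3) - 2) ≠ 0 := by intro h; linarith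
  have v5 : (-((n:ℚ)*3) - 4 + (k:ℚ)) ≠ 0 := by intro h; linarith
  have v6 : (-((n:ℚ)*3) - 1 + (k:ℚ)) ≠ 0 := by intro h; linarith
  have v7 : (-((n:ℚ)*3) - 1 + ((k:ℚ)+1)) ≠ 0 := by intro h; linarith
  field_simp [hc, hd, w1, w2, w3, w4, w5, z1, z2, z3, z4, z5, hy2, hy3, hy4, hfac, u1, u2, v1, v2, v3, v4, v5, v6, v7]
  ring

example : True := trivial

lemma Tt_top (n : ℕ) : Tt n (n+1) = 0 := by
  simp only [Tt]
  rw [asc_neg_self]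
  simp

lemma Hh_top (n : ℕ) : Hh n (n+1) = 0 := by
  simp only [Hh]
  rw [asc_neg_self]
  simp

lemma rec_ (n : ℕ) (hn : 1 ≤ n) :
    (12*n+8 : ℚ) * (∑ k ∈ Finset.range (n+2), Tt (n+1) k)
      = (6*n+5) * ∑ k ∈ Finset.range (n+1), Tt n k := by
  have tele : ∑ k ∈ Finset.range (n+2), ((12*n+8 : ℚ) * Tt (n+1) k - (6*n+5) * Tt n k)
      = gg n (n+2) - gg n 0 := by
    rw [← Finset.sum_range_sub (gg n)]
    refine Finset.sum_congr rfl ?_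
    intro k hk
    rcases k with _ | j
    · exact key0 n
    · exact key n j (by simp at hk; omega) hn
  have h2 : gg n (n+2) = 0 := Hh_top n
  have h0 : gg n 0 = 0 := rfl
  rw [h2, h0, Finset.sum_sub_distrib, ← Finset.mul_sum, ← Finset.mul_sum] at tele
  have hsplit : ∑ k ∈ Finset.range (n+2), Tt n k
      = (∑ k ∈ Finset.range (n+1), Tt n k) + Tt n (n+1) := Finset.sum_range_succ _ _
  rw [hsplit, Tt_top n] at tele
  linarith

theorem main_aux (n : ℕ) :
    ∑ k ∈ Finset.range (n+1), Tt n k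
      = (ascPochhammer ℚ n).eval (5/6) / (2^n * (ascPochhammer ℚ n).eval (2/3)) := by
  induction n with
  | zero => simp [Tt]
  | succ n ih =>
    rcases Nat.eq_zero_or_pos n with h0 | hn
    · subst h0
      rw [Finset.sum_range_succ, Finset.sum_range_one]
      simp [Tt, ascPochhammer_one, ascPochhammer_succ_eval]
      norm_num
    · have h128 : (12*(n:ℚ)+8) ≠ 0 := by positivity
      have hr := rec_ n hn
      have key2 : (∑ k ∈ Finset.range (n+2), Tt (n+1) k)
          = (6*(n:ℚ)+5) * (∑ k ∈ Finset.range (n+1), Tt n k) / (12*(n:ℚ)+8) := by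
        rw [eq_div_iff h128]
        linear_combination hr
      rw [show n+1+1 = n+2 from rfl, key2, ih]
      rw [ascPochhammer_succ_eval, ascPochhammer_succ_eval]
      have hQ : (ascPochhammer ℚ n).eval (2/3) ≠ 0 := by
        apply asc_ne; intro j hj; positivity
      have h2n : (2:ℚ)^n ≠ 0 := by positivity
      have h23 : ((2:ℚ)/3+(n:ℚ)) ≠ 0 := by positivity
      field_simp
      ring

theorem strange_identity_G (n : ℕ) :
    ∑ k ∈ Finset.range (n + 1),
      (ascPochhammer ℚ k).eval (-(n : ℚ)) * (ascPochhammer ℚ k).eval (-1 / 3 - (n : ℚ)) /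
        ((ascPochhammer ℚ k).eval 1 * (ascPochhammer ℚ k).eval (-(3 * n : ℚ) - 1)) *
        (9 / 8 : ℚ) ^ k
      = (ascPochhammer ℚ n).eval (5 / 6) / (2 ^ n * (ascPochhammer ℚ n).eval (2 / 3)) := by
  simpa only [Tt] using main_aux n
end

section
/- For every nonnegative integer n: ∑_{k=0}^{n} (3n+k+3) · (−n)_k(−1/3−n)_k/[(1)_k(−3n−1)_k] · (9/8)^k = 3 · 2^{1−n} · Γ(2/3)Γ(3/2+n)/[Γ(1/2)Γ(2/3+n)]. -/
open Polynomial Finset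
noncomputable def Epoch (x : ℝ) (k : ℕ) : ℝ := (ascPochhammer ℝ k).eval x
lemma Epoch_zero (x : ℝ) : Epoch x 0 = 1 := by simp [Epoch]
lemma Epoch_succ (x : ℝ) (k : ℕ) : Epoch x (k+1) = Epoch x k * (x + k) := by
  simp [Epoch, ascPochhammer_succ_eval]
lemma Epoch_succ_left (x : ℝ) (k : ℕ) : Epoch x (k+1) = x * Epoch (x+1) k := by
  simp [Epoch, ascPochhammer_succ_left, eval_comp]
lemma Epoch_ne_zero_of_nonpos {x : ℝ} (k : ℕ) (h : x + k ≤ 0) : Epoch x k ≠ 0 := by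
  induction k with
  | zero => simp [Epoch_zero]
  | succ m ih =>
    rw [Epoch_succ]
    push_cast at h
    have h1 : x + m < 0 := by linarith
    exact mul_ne_zero (ih (by linarith)) (ne_of_lt h1)
lemma Epoch_pos {x : ℝ} (k : ℕ) (h : 0 < x) : 0 < Epoch x k := by
  induction k with
  | zero => simp [Epoch_zero]
  | succ m ih =>
    rw [Epoch_succ]
    positivity
noncomputable def TT (n k : ℕ) : ℝ :=
  ((3 * n + k + 3 : ℝ)) * (Epoch (-(n : ℝ)) k * Epoch (-1 / 3 - (n : ℝ)) k) /
    (Epoch 1 k * Epoch (-(3 * n : ℝ) - 1) k) * (9 / 8 : ℝ) ^ k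
noncomputable def GG (n : ℕ) : ℕ → ℝ
  | 0 => 0
  | (j+1) => (-4 / (9 * (6 * (n : ℝ) + 4))) *
      ((3 * (n : ℝ) + j + 4) * ((j : ℝ) - 3 * n - 1) * ((j : ℝ) + 3 * n + 7) *
        (4 * (j : ℝ) - 6 * n - 3)) *
      (Epoch (-(n : ℝ)) j * Epoch (-1 / 3 - (n : ℝ)) j) /
      (Epoch 1 j * Epoch (-(3 * n : ℝ) - 1) (j + 1) * ((j : ℝ) + 3 * n + 4)) *
      (9 / 8 : ℝ) ^ (j + 1)

set_option maxHeartbeats 2000000 in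
lemma wz_succ (n j : ℕ) (hn : 1 ≤ n) (hj : j ≤ n) :
    TT (n+1) (j+1) - (6 * (n : ℝ) + 9) / (12 * n + 8) * TT n (j+1)
      = GG n (j+1+1) - GG n (j+1) := by
  have hjn : (j : ℝ) ≤ n := Nat.cast_le.mpr hj
  have hn1 : (1 : ℝ) ≤ n := by exact_mod_cast hn
  set A := Epoch (-(n : ℝ)) j with hA
  set B := Epoch (-1 / 3 - (n : ℝ)) j with hB
  set C := Epoch 1 j with hC
  set D := Epoch (-(3 * n : ℝ) - 1) j with hD
  have hCne : C ≠ 0 := (Epoch_pos j one_pos).ne'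
  have hDne : D ≠ 0 := Epoch_ne_zero_of_nonpos j (by push_cast; linarith)
  have e1 : Epoch (-((n : ℝ) + 1)) (j+1) = (-(n : ℝ) - 1) * A := by
    rw [show (-((n : ℝ) + 1)) = (-(n : ℝ) - 1) by ring, Epoch_succ_left,
      show (-(n : ℝ) - 1 + 1) = -(n : ℝ) by ring, hA]
  have e2 : Epoch (-1 / 3 - ((n : ℝ) + 1)) (j+1) = (-(n : ℝ) - 4/3) * B := by
    rw [show (-1 / 3 - ((n : ℝ) + 1)) = (-(n : ℝ) - 4/3) by ring, Epoch_succ_left,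
      show (-(n : ℝ) - 4/3 + 1) = -1 / 3 - (n : ℝ) by ring, hB]
  have e3 : Epoch 1 (j+1) = C * (1 + j) := by rw [Epoch_succ, hC]
  have d1 : ((j : ℝ) - 3 * n - 3) ≠ 0 := by nlinarith
  have d2 : ((j : ℝ) - 3 * n - 2) ≠ 0 := by nlinarith
  have e5 : Epoch (-(3 * (n : ℝ)) - 3) j
      = ((-(3 * (n : ℝ)) - 3) * (-(3 * (n : ℝ)) - 2)) * D
        / (((j : ℝ) - 3 * n - 3) * ((j : ℝ) - 3 * n - 2)) := by
    have h1 : Epoch (-(3 * (n : ℝ)) - 3) j * ((-(3 * (n : ℝ)) - 3) + j)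
        = (-(3 * (n : ℝ)) - 3) * Epoch (-(3 * (n : ℝ)) - 2) j := by
      rw [← Epoch_succ, Epoch_succ_left, show (-(3 * (n : ℝ)) - 3 + 1) = -(3 * (n : ℝ)) - 2 by ring]
    have h2 : Epoch (-(3 * (n : ℝ)) - 2) j * ((-(3 * (n : ℝ)) - 2) + j)
        = (-(3 * (n : ℝ)) - 2) * D := by
      rw [← Epoch_succ, Epoch_succ_left, show (-(3 * (n : ℝ)) - 2 + 1) = -(3 * n : ℝ) - 1 by ring, hD]
    rw [eq_div_iff (mul_ne_zero d1 d2)]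
    linear_combination ((j : ℝ) - 3 * n - 2) * h1 + (-(3 * (n : ℝ)) - 3) * h2

  have e4 : Epoch (-(3 * ((n : ℝ) + 1)) - 1) (j+1)
      = (-(3 * (n : ℝ)) - 4) * Epoch (-(3 * (n : ℝ)) - 3) j := by
    rw [show (-(3 * ((n : ℝ) + 1)) - 1) = (-(3 * (n : ℝ)) - 4) by ring, Epoch_succ_left,
      show (-(3 * (n : ℝ)) - 4 + 1) = -(3 * (n : ℝ)) - 3 by ring]
  have f1 : Epoch (-(n : ℝ)) (j+1) = A * (-(n : ℝ) + j) := by rw [Epoch_succ, hA]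
  have f2 : Epoch (-1 / 3 - (n : ℝ)) (j+1) = B * (-1 / 3 - (n : ℝ) + j) := by
    rw [Epoch_succ, hB]
  have f4 : Epoch (-(3 * n : ℝ) - 1) (j+1) = D * (-(3 * (n : ℝ)) - 1 + j) := by
    rw [Epoch_succ, hD]
  have g4 : Epoch (-(3 * n : ℝ) - 1) (j+1+1)
      = D * (-(3 * (n : ℝ)) - 1 + j) * (-(3 * (n : ℝ)) + j) := by
    rw [Epoch_succ, f4]; push_cast; ring
  have d3 : ((j : ℝ) - 3 * n - 1) ≠ 0 := by nlinarith
  have d4 : ((j : ℝ) - 3 * n) ≠ 0 := by nlinarith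
  have d5 : ((j : ℝ) + 3 * n + 4) ≠ 0 := by positivity
  have d6 : (1 : ℝ) + j ≠ 0 := by positivity
  have d7 : (12 * (n : ℝ) + 8) ≠ 0 := by positivity
  have d8 : (9 * (6 * (n : ℝ) + 4)) ≠ 0 := by positivity
  simp only [TT, GG]
  push_cast
  rw [e1, e2, e3, e4, e5, f1, f2, f4, g4]
  simp only [pow_succ]
  set p := (9/8 : ℝ)^j with hp
  simp only [← hA, ← hB, ← hC, ← hD]
  have hpne : p ≠ 0 := by rw [hp]; positivity
  have d3' : (-(3 * (n : ℝ)) - 1 + j) ≠ 0 := fun h => d3 (by linarith)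
  have d4' : (-(3 * (n : ℝ)) + j) ≠ 0 := fun h => d4 (by linarith)
  have d5' : ((j : ℝ) + 1 + 3 * n + 4) ≠ 0 := by positivity
  have d9 : (-(3 * (n : ℝ)) - 4) ≠ 0 := by nlinarith
  have d10 : (-(3 * (n : ℝ)) - 3) ≠ 0 := by nlinarith
  have d11 : (-(3 * (n : ℝ)) - 2) ≠ 0 := by nlinarith
  have d12 : (-(n : ℝ) - 1) ≠ 0 := by nlinarith
  field_simp
  ring

lemma wz_zero (n : ℕ) :
    TT (n+1) 0 - (6 * (n : ℝ) + 9) / (12 * n + 8) * TT n 0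
      = GG n 1 - GG n 0 := by
  have h1 : Epoch (-(3 * n : ℝ) - 1) (0+1) = -(3 * (n : ℝ)) - 1 := by
    rw [Epoch_succ, Epoch_zero]; push_cast; ring
  have d1 : (-(3 * (n : ℝ)) - 1) ≠ 0 := by nlinarith [Nat.cast_nonneg (α := ℝ) n]
  have d5 : ((0 : ℝ) + 3 * n + 4) ≠ 0 := by positivity
  have d7 : (12 * (n : ℝ) + 8) ≠ 0 := by positivity
  have d8 : (9 * (6 * (n : ℝ) + 4)) ≠ 0 := by positivity
  simp only [TT, GG, Epoch_zero, h1]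
  push_cast
  field_simp
  ring

lemma TT_top (n : ℕ) : TT n (n+1) = 0 := by
  have : Epoch (-(n : ℝ)) (n+1) = 0 := by rw [Epoch_succ]; simp
  simp [TT, this]

lemma GG_top (n : ℕ) : GG n (n+2) = 0 := by
  have : Epoch (-(n : ℝ)) (n+1) = 0 := by rw [Epoch_succ]; simp
  show GG n ((n+1)+1) = 0
  simp only [GG, this]
  simp

lemma step (n : ℕ) (hn : 1 ≤ n) :
    ∑ k ∈ Finset.range (n+2), TT (n+1) k
      = (6 * (n : ℝ) + 9) / (12 * n + 8) * ∑ k ∈ Finset.range (n+1), TT n k := by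
  have key : ∀ k ∈ Finset.range (n+2),
      TT (n+1) k = (6 * (n : ℝ) + 9) / (12 * n + 8) * TT n k + (GG n (k+1) - GG n k) := by
    intro k hk
    rcases k with _ | j
    · have := wz_zero n; linarith [wz_zero n]
    · have hj : j ≤ n := by
        have := Finset.mem_range.mp hk; omega
      linarith [wz_succ n j hn hj]
  rw [Finset.sum_congr rfl key, Finset.sum_add_distrib, Finset.sum_range_sub (GG n),
    ← Finset.mul_sum, GG_top]
  have : GG n 0 = 0 := rfl
  rw [this, Finset.sum_range_succ, TT_top]
  ring

noncomputable def Rh (n : ℕ) : ℝ :=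
  3 * (2 : ℝ) ^ ((1 : ℝ) - (n : ℝ)) *
    (Real.Gamma (2 / 3) * Real.Gamma (3 / 2 + n) / (Real.Gamma (1 / 2) * Real.Gamma (2 / 3 + n)))

lemma Rh_succ (n : ℕ) : Rh (n+1) = (6 * (n : ℝ) + 9) / (12 * n + 8) * Rh n := by
  have hg1 : Real.Gamma (3 / 2 + (n + 1 : ℕ)) = (3 / 2 + n) * Real.Gamma (3 / 2 + n) := by
    rw [show (3 / 2 + ((n + 1 : ℕ) : ℝ)) = (3 / 2 + (n : ℝ)) + 1 by push_cast; ring,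
      Real.Gamma_add_one (by positivity)]
  have hg2 : Real.Gamma (2 / 3 + (n + 1 : ℕ)) = (2 / 3 + n) * Real.Gamma (2 / 3 + n) := by
    rw [show (2 / 3 + ((n + 1 : ℕ) : ℝ)) = (2 / 3 + (n : ℝ)) + 1 by push_cast; ring,
      Real.Gamma_add_one (by positivity)]
  have hp : (2 : ℝ) ^ ((1 : ℝ) - ((n + 1 : ℕ) : ℝ)) = (2 : ℝ) ^ ((1 : ℝ) - (n : ℝ)) / 2 := by
    rw [show ((1 : ℝ) - ((n + 1 : ℕ) : ℝ)) = ((1 : ℝ) - (n : ℝ)) - 1 by push_cast; ring,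
      Real.rpow_sub two_pos, Real.rpow_one]
  have hG1 : Real.Gamma (3 / 2 + n) ≠ 0 := (Real.Gamma_pos_of_pos (by positivity)).ne'
  have hG2 : Real.Gamma (2 / 3 + n) ≠ 0 := (Real.Gamma_pos_of_pos (by positivity)).ne'
  have hG3 : Real.Gamma (1 / 2) ≠ 0 := (Real.Gamma_pos_of_pos (by norm_num)).ne'
  have hd1 : (2 / 3 + (n : ℝ)) ≠ 0 := by positivity
  have hd2 : (12 * (n : ℝ) + 8) ≠ 0 := by positivity
  rw [Rh, Rh, hg1, hg2, hp]
  field_simp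
  ring

lemma S0 : ∑ k ∈ Finset.range 1, TT 0 k = 3 := by
  simp [TT, Epoch_zero]

lemma R0 : Rh 0 = 3 := by
  have h32 : Real.Gamma (3 / 2) = (1 / 2) * Real.Gamma (1 / 2) := by
    rw [show (3 / 2 : ℝ) = 1 / 2 + 1 by norm_num, Real.Gamma_add_one (by norm_num)]
  have hG3 : Real.Gamma (1 / 2) ≠ 0 := (Real.Gamma_pos_of_pos (by norm_num)).ne'
  have hG2 : Real.Gamma (2 / 3) ≠ 0 := (Real.Gamma_pos_of_pos (by norm_num)).ne'
  rw [Rh]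
  norm_num [h32]
  field_simp
  ring

lemma S1 : ∑ k ∈ Finset.range 2, TT 1 k = 27 / 8 := by
  rw [Finset.sum_range_succ, Finset.sum_range_succ, Finset.sum_range_zero]
  have h1 : ∀ x : ℝ, Epoch x 1 = x := by
    intro x; rw [show (1 : ℕ) = 0 + 1 from rfl, Epoch_succ, Epoch_zero]; simp
  simp only [TT, Epoch_zero, h1]
  norm_num

lemma R1 : Rh 1 = 27 / 8 := by
  have h32 : Real.Gamma (3 / 2 + (1 : ℕ)) = (3 / 2) * ((1 / 2) * Real.Gamma (1 / 2)) := by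
    rw [show (3 / 2 + ((1 : ℕ) : ℝ)) = (3 / 2) + 1 by norm_num,
      Real.Gamma_add_one (by norm_num), show (3 / 2 : ℝ) = 1 / 2 + 1 by norm_num,
      Real.Gamma_add_one (by norm_num)]
  have h23 : Real.Gamma (2 / 3 + (1 : ℕ)) = (2 / 3) * Real.Gamma (2 / 3) := by
    rw [show (2 / 3 + ((1 : ℕ) : ℝ)) = (2 / 3) + 1 by norm_num,
      Real.Gamma_add_one (by norm_num)]
  have hG3 : Real.Gamma (1 / 2) ≠ 0 := (Real.Gamma_pos_of_pos (by norm_num)).ne'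
  have hG2 : Real.Gamma (2 / 3) ≠ 0 := (Real.Gamma_pos_of_pos (by norm_num)).ne'
  rw [Rh, h32, h23, show ((1 : ℝ) - ((1 : ℕ) : ℝ)) = 0 by norm_num, Real.rpow_zero]
  field_simp
  ring

lemma main_id : ∀ n : ℕ, ∑ k ∈ Finset.range (n+1), TT n k = Rh n := by
  intro n
  induction n with
  | zero => rw [S0, R0]
  | succ m ih =>
    rcases Nat.eq_zero_or_pos m with hm | hm
    · subst hm; rw [S1, R1]
    · rw [show m + 1 + 1 = m + 2 from rfl, step m hm, ih, Rh_succ]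

theorem strange_identity_K (n : ℕ) :
    ∑ k ∈ Finset.range (n + 1),
      ((3 * n + k + 3 : ℝ)) *
        ((ascPochhammer ℝ k).eval (-(n : ℝ)) * (ascPochhammer ℝ k).eval (-1 / 3 - (n : ℝ))) /
        ((ascPochhammer ℝ k).eval 1 * (ascPochhammer ℝ k).eval (-(3 * n : ℝ) - 1)) *
        (9 / 8 : ℝ) ^ k
      = 3 * (2 : ℝ) ^ ((1 : ℝ) - (n : ℝ)) *
          (Real.Gamma (2 / 3) * Real.Gamma (3 / 2 + n) /
            (Real.Gamma (1 / 2) * Real.Gamma (2 / 3 + n))) := by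
  exact main_id n
end

section
/- For every nonnegative integer n: ∑_{k=0}^{n} (−n)_k(−1/2−n)_k/[(1)_k(−4n−2)_k] · (8/9)^k = 3^{n+1}·Γ(n+5/6)Γ(n+7/6)/(2·Γ(1/2)·Γ(2n+3/2)). -/
open Finset Polynomial

noncomputable def Fk72 (n k : ℕ) : ℝ :=
  (ascPochhammer ℝ k).eval (-(n : ℝ)) * (ascPochhammer ℝ k).eval (-1 / 2 - (n : ℝ)) /
    ((ascPochhammer ℝ k).eval 1 * (ascPochhammer ℝ k).eval (-(4 * n : ℝ) - 2)) *
    (8 / 9 : ℝ) ^ k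

noncomputable def Hk72 (n k : ℕ) : ℝ :=
  3 / 16 * (((k : ℝ) + 1) * (-342 - 996 * n - 936 * n ^ 2 - 288 * n ^ 3)
      + ((k : ℝ) + 1) ^ 2 * (249 + 468 * n + 216 * n ^ 2)
      - 18 * ((k : ℝ) + 1) ^ 3 - 9 * ((k : ℝ) + 1) ^ 4)
    * ((ascPochhammer ℝ k).eval (-(n : ℝ)) * (ascPochhammer ℝ k).eval (-1 / 2 - (n : ℝ)))
    / ((ascPochhammer ℝ (k + 1)).eval 1 * (ascPochhammer ℝ (k + 1)).eval (-(4 * n : ℝ) - 2))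
    * (8 / 9 : ℝ) ^ (k + 1)

lemma poch_succ_left_eval (k : ℕ) (x : ℝ) :
    (ascPochhammer ℝ (k + 1)).eval x = x * (ascPochhammer ℝ k).eval (x + 1) := by
  simp [ascPochhammer_succ_left, eval_comp]

lemma poch_shift (k : ℕ) (x : ℝ) :
    (ascPochhammer ℝ k).eval x * (x + k) = x * (ascPochhammer ℝ k).eval (x + 1) := by
  rw [← ascPochhammer_succ_eval, poch_succ_left_eval]

lemma poch_ne_zero {x : ℝ} {k : ℕ} (h : ∀ i : ℕ, i < k → x + i ≠ 0) :
    (ascPochhammer ℝ k).eval x ≠ 0 := by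
  induction k with
  | zero => simp
  | succ k ih =>
    rw [ascPochhammer_succ_eval]
    exact mul_ne_zero (ih fun i hi => h i (hi.trans k.lt_succ_self)) (h k k.lt_succ_self)

set_option maxHeartbeats 2000000 in
lemma step72 (n k : ℕ) (hk : k ≤ n) :
    3 * (4 * (n : ℝ) + 3) * (4 * (n : ℝ) + 5) * Fk72 (n + 1) (k + 1)
      - (6 * (n : ℝ) + 5) * (6 * (n : ℝ) + 7) * Fk72 n (k + 1)
    = Hk72 n (k + 1) - Hk72 n k := by
  have hkn : (k : ℝ) ≤ (n : ℝ) := Nat.cast_le.mpr hk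
  have h0n : (0 : ℝ) ≤ n := Nat.cast_nonneg n
  have h0k : (0 : ℝ) ≤ k := Nat.cast_nonneg k
  have e1 : (ascPochhammer ℝ (k + 1)).eval (-((n : ℝ) + 1))
      = (-((n : ℝ) + 1)) * (ascPochhammer ℝ k).eval (-(n : ℝ)) := by
    rw [poch_succ_left_eval, show (-((n : ℝ) + 1) + 1) = -(n : ℝ) from by ring]
  have e2 : (ascPochhammer ℝ (k + 1)).eval (-1 / 2 - ((n : ℝ) + 1))
      = (-1 / 2 - ((n : ℝ) + 1)) * (ascPochhammer ℝ k).eval (-1 / 2 - (n : ℝ)) := by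
    rw [poch_succ_left_eval, show (-1 / 2 - ((n : ℝ) + 1) + 1) = -1 / 2 - (n : ℝ) from by ring]
  have e4 : (ascPochhammer ℝ (k + 1)).eval (-(4 * ((n : ℝ) + 1)) - 2)
      = (-(4 * ((n : ℝ) + 1)) - 2) * (ascPochhammer ℝ k).eval (-(4 * (n : ℝ)) - 5) := by
    rw [poch_succ_left_eval,
      show (-(4 * ((n : ℝ) + 1)) - 2 + 1) = -(4 * (n : ℝ)) - 5 from by ring]
  have hd3 : (-(4 * (n : ℝ)) - 3) + k ≠ 0 := by nlinarith
  have hd4 : (-(4 * (n : ℝ)) - 4) + k ≠ 0 := by nlinarith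
  have hd5 : (-(4 * (n : ℝ)) - 5) + k ≠ 0 := by nlinarith
  have c3 : (ascPochhammer ℝ k).eval (-(4 * (n : ℝ)) - 3)
      = (-(4 * (n : ℝ)) - 3) * (ascPochhammer ℝ k).eval (-(4 * (n : ℝ)) - 2)
        / ((-(4 * (n : ℝ)) - 3) + k) := by
    rw [eq_div_iff hd3]
    have := poch_shift k (-(4 * (n : ℝ)) - 3)
    rw [show (-(4 * (n : ℝ)) - 3 + 1) = -(4 * (n : ℝ)) - 2 from by ring] at this
    exact this
  have c4 : (ascPochhammer ℝ k).eval (-(4 * (n : ℝ)) - 4)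
      = (-(4 * (n : ℝ)) - 4) * (ascPochhammer ℝ k).eval (-(4 * (n : ℝ)) - 3)
        / ((-(4 * (n : ℝ)) - 4) + k) := by
    rw [eq_div_iff hd4]
    have := poch_shift k (-(4 * (n : ℝ)) - 4)
    rw [show (-(4 * (n : ℝ)) - 4 + 1) = -(4 * (n : ℝ)) - 3 from by ring] at this
    exact this
  have c5 : (ascPochhammer ℝ k).eval (-(4 * (n : ℝ)) - 5)
      = (-(4 * (n : ℝ)) - 5) * (ascPochhammer ℝ k).eval (-(4 * (n : ℝ)) - 4)
        / ((-(4 * (n : ℝ)) - 5) + k) := by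
    rw [eq_div_iff hd5]
    have := poch_shift k (-(4 * (n : ℝ)) - 5)
    rw [show (-(4 * (n : ℝ)) - 5 + 1) = -(4 * (n : ℝ)) - 4 from by ring] at this
    exact this
  have hd : (ascPochhammer ℝ k).eval (-(4 * (n : ℝ)) - 2) ≠ 0 := by
    apply poch_ne_zero
    intro i hi
    have : (i : ℝ) ≤ n := Nat.cast_le.mpr (le_of_lt (lt_of_lt_of_le hi hk))
    nlinarith
  have hc : ((Nat.factorial k : ℕ) : ℝ) ≠ 0 := Nat.cast_ne_zero.mpr (Nat.factorial_ne_zero k)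
  simp only [Fk72, Hk72]
  push_cast
  rw [e1, e2, e4]
  simp only [ascPochhammer_succ_eval, ascPochhammer_eval_one]
  push_cast
  rw [c5, c4, c3]
  have hk1 : (k : ℝ) + 1 ≠ 0 := by positivity
  have hk2 : (k : ℝ) + 1 + 1 ≠ 0 := by positivity
  have hx2 : -(4 * (n : ℝ)) - 2 + k ≠ 0 := by nlinarith
  have hx1 : -(4 * (n : ℝ)) - 2 + ((k : ℝ) + 1) ≠ 0 := by nlinarith
  have hm6 : -(4 * ((n : ℝ) + 1)) - 2 ≠ 0 := by nlinarith
  have hm5 : -(4 * (n : ℝ)) - 5 ≠ 0 := by nlinarith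
  have hm4 : -(4 * (n : ℝ)) - 4 ≠ 0 := by nlinarith
  have hm3 : -(4 * (n : ℝ)) - 3 ≠ 0 := by nlinarith
  have hn1 : -1 - (n : ℝ) ≠ 0 := by nlinarith
  have hn1' : -((n : ℝ) + 1) ≠ 0 := by nlinarith
  have hn2 : -1 / 2 - ((n : ℝ) + 1) ≠ 0 := by nlinarith
  have hn3 : -(n : ℝ) - 1 ≠ 0 := by nlinarith
  field_simp
  ring

lemma base72 (n : ℕ) :
    3 * (4 * (n : ℝ) + 3) * (4 * (n : ℝ) + 5) * Fk72 (n + 1) 0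
      - (6 * (n : ℝ) + 5) * (6 * (n : ℝ) + 7) * Fk72 n 0 = Hk72 n 0 := by
  have hm : -(4 * (n : ℝ)) - 2 ≠ 0 := by
    have : (0:ℝ) ≤ n := Nat.cast_nonneg n
    nlinarith
  simp only [Fk72, Hk72]
  simp [ascPochhammer_succ_eval]
  field_simp
  ring

lemma tele72 (n : ℕ) : ∀ m : ℕ, m ≤ n + 1 →
    ∑ k ∈ range (m + 1),
      (3 * (4 * (n : ℝ) + 3) * (4 * (n : ℝ) + 5) * Fk72 (n + 1) k
        - (6 * (n : ℝ) + 5) * (6 * (n : ℝ) + 7) * Fk72 n k) = Hk72 n m := by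
  intro m
  induction m with
  | zero => intro _; rw [Finset.sum_range_one]; exact base72 n
  | succ m ih =>
    intro hm
    rw [Finset.sum_range_succ, ih (by omega)]
    have := step72 n m (by omega)
    linarith

lemma Fk72_top (n : ℕ) : Fk72 n (n + 1) = 0 := by
  have hA : (ascPochhammer ℝ (n + 1)).eval (-(n : ℝ)) = 0 := by
    rw [ascPochhammer_succ_eval]; simp
  simp [Fk72, hA]

lemma Hk72_top (n : ℕ) : Hk72 n (n + 1) = 0 := by
  have hA : (ascPochhammer ℝ (n + 1)).eval (-(n : ℝ)) = 0 := by
    rw [ascPochhammer_succ_eval]; simp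
  simp [Hk72, hA]

lemma recur72 (n : ℕ) :
    3 * (4 * (n : ℝ) + 3) * (4 * (n : ℝ) + 5) * ∑ k ∈ range (n + 2), Fk72 (n + 1) k
      = (6 * (n : ℝ) + 5) * (6 * (n : ℝ) + 7) * ∑ k ∈ range (n + 1), Fk72 n k := by
  have t := tele72 n (n + 1) le_rfl
  rw [Hk72_top, Finset.sum_sub_distrib, ← Finset.mul_sum, ← Finset.mul_sum] at t
  have h2 : ∑ k ∈ range (n + 1 + 1), Fk72 n k = ∑ k ∈ range (n + 1), Fk72 n k := by
    rw [Finset.sum_range_succ, Fk72_top, add_zero]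
  rw [h2] at t
  linarith

noncomputable def Rhs72 (n : ℕ) : ℝ :=
  3 ^ (n + 1) * Real.Gamma ((n : ℝ) + 5 / 6) * Real.Gamma ((n : ℝ) + 7 / 6) /
    (2 * Real.Gamma (1 / 2) * Real.Gamma (2 * (n : ℝ) + 3 / 2))

lemma rhs72_zero : Rhs72 0 = 1 := by
  have h76 : Real.Gamma (7 / 6) = (1 / 6) * Real.Gamma (1 / 6) := by
    rw [show (7 / 6 : ℝ) = 1 / 6 + 1 from by norm_num,
      Real.Gamma_add_one (by norm_num)]
  have hrefl : Real.Gamma (1 / 6) * Real.Gamma (5 / 6) = 2 * Real.pi := by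
    have := Real.Gamma_mul_Gamma_one_sub (1 / 6)
    rw [show (1 : ℝ) - 1 / 6 = 5 / 6 from by norm_num,
      show Real.pi * (1 / 6) = Real.pi / 6 from by ring,
      Real.sin_pi_div_six] at this
    rw [this]; ring
  have h32 : Real.Gamma (3 / 2) = (1 / 2) * Real.Gamma (1 / 2) := by
    rw [show (3 / 2 : ℝ) = 1 / 2 + 1 from by norm_num,
      Real.Gamma_add_one (by norm_num)]
  have h12 : Real.Gamma (1 / 2) = Real.sqrt Real.pi := Real.Gamma_one_half_eq
  have hss : Real.sqrt Real.pi * Real.sqrt Real.pi = Real.pi :=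
    Real.mul_self_sqrt Real.pi_pos.le
  have hpi : Real.pi ≠ 0 := Real.pi_ne_zero
  simp only [Rhs72]
  norm_num
  rw [show (2 : ℝ) * Real.Gamma (1 / 2) * Real.Gamma (3 / 2)
      = Real.pi from by rw [h32, h12]; nlinarith [hss]]
  rw [h76]
  field_simp
  nlinarith [hrefl]

lemma rhs72_rec (n : ℕ) :
    3 * (4 * (n : ℝ) + 3) * (4 * (n : ℝ) + 5) * Rhs72 (n + 1)
      = (6 * (n : ℝ) + 5) * (6 * (n : ℝ) + 7) * Rhs72 n := by
  have h0n : (0 : ℝ) ≤ n := Nat.cast_nonneg n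
  have g1 : Real.Gamma ((↑(n + 1) : ℝ) + 5 / 6)
      = ((n : ℝ) + 5 / 6) * Real.Gamma ((n : ℝ) + 5 / 6) := by
    push_cast
    rw [show ((n : ℝ) + 1 + 5 / 6) = ((n : ℝ) + 5 / 6) + 1 from by ring,
      Real.Gamma_add_one (by nlinarith)]
  have g2 : Real.Gamma ((↑(n + 1) : ℝ) + 7 / 6)
      = ((n : ℝ) + 7 / 6) * Real.Gamma ((n : ℝ) + 7 / 6) := by
    push_cast
    rw [show ((n : ℝ) + 1 + 7 / 6) = ((n : ℝ) + 7 / 6) + 1 from by ring,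
      Real.Gamma_add_one (by nlinarith)]
  have g3 : Real.Gamma (2 * (↑(n + 1) : ℝ) + 3 / 2)
      = (2 * (n : ℝ) + 3 / 2 + 1) * (2 * (n : ℝ) + 3 / 2)
        * Real.Gamma (2 * (n : ℝ) + 3 / 2) := by
    push_cast
    rw [show (2 * ((n : ℝ) + 1) + 3 / 2) = (2 * (n : ℝ) + 3 / 2 + 1) + 1 from by ring,
      Real.Gamma_add_one (by nlinarith), Real.Gamma_add_one (by nlinarith)]
    ring
  have hG3 : Real.Gamma (2 * (n : ℝ) + 3 / 2) ≠ 0 :=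
    (Real.Gamma_pos_of_pos (by nlinarith)).ne'
  have hGh : Real.Gamma (1 / 2) ≠ 0 :=
    (Real.Gamma_pos_of_pos (by norm_num)).ne'
  have ha : (2 * (n : ℝ) + 3 / 2 + 1) ≠ 0 := by nlinarith
  have hb : (2 * (n : ℝ) + 3 / 2) ≠ 0 := by nlinarith
  simp only [Rhs72, g1, g2, g3]
  rw [pow_succ (3 : ℝ) (n + 1)]
  field_simp
  ring

lemma sum72 (n : ℕ) : ∑ k ∈ range (n + 1), Fk72 n k = Rhs72 n := by
  induction n with
  | zero =>
    rw [Finset.sum_range_one, rhs72_zero]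
    norm_num [Fk72]
  | succ n ih =>
    have h1 := recur72 n
    rw [ih] at h1
    have h2 := rhs72_rec n
    have hnz : 3 * (4 * (n : ℝ) + 3) * (4 * (n : ℝ) + 5) ≠ 0 := by
      have : (0 : ℝ) ≤ n := Nat.cast_nonneg n
      positivity
    exact mul_left_cancel₀ hnz (h1.trans h2.symm)



theorem strange_identity_72b (n : ℕ) :
    ∑ k ∈ Finset.range (n + 1),
      (ascPochhammer ℝ k).eval (-(n : ℝ)) * (ascPochhammer ℝ k).eval (-1 / 2 - (n : ℝ)) /
        ((ascPochhammer ℝ k).eval 1 * (ascPochhammer ℝ k).eval (-(4 * n : ℝ) - 2)) *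
        (8 / 9 : ℝ) ^ k
      = 3 ^ (n + 1) * Real.Gamma ((n : ℝ) + 5 / 6) * Real.Gamma ((n : ℝ) + 7 / 6) /
          (2 * Real.Gamma (1 / 2) * Real.Gamma (2 * (n : ℝ) + 3 / 2)) := by
  exact sum72 n
end
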